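/- The superfidelity is supermultiplicative with respect to tensor products: for density matrices ρ₁, ρ₂, ρ₃, ρ₄, G(ρ₁ ⊗ ρ₂, ρ₃ ⊗ ρ₄) ≥ G(ρ₁,ρ₃)·G(ρ₂,ρ₄). -/

import Mathlib

open Matrix ComplexOrder Kronecker

noncomputable def sG {n : Type*} [Fintype n] [DecidableEq n]
    (ρ σ : Matrix n n ℂ) : ℝ :=
  (trace (ρ * σ)).re +
    Real.sqrt (1 - (trace (ρ * ρ)).re) * Real.sqrt (1 - (trace (σ * σ)).re)

set_option linter.unusedSectionVars false
variable {n : Type*} [Fintype n] [DecidableEq n]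

lemma trace_mul_im_zero (A B : Matrix n n ℂ) (hA : A.IsHermitian) (hB : B.IsHermitian) :
    (trace (A * B)).im = 0 := by
  have h : (starRingEnd ℂ) (trace (A * B)) = trace (A * B) := by
    calc (starRingEnd ℂ) (trace (A * B)) = trace ((A * B)ᴴ) := by
          rw [trace_conjTranspose]; rfl
      _ = trace (Bᴴ * Aᴴ) := by rw [conjTranspose_mul]
      _ = trace (A * B) := by rw [hA.eq, hB.eq, trace_mul_comm]
  exact Complex.conj_eq_iff_im.mp h

lemma trace_mul_re_eq_sum (A B : Matrix n n ℂ) (hB : B.IsHermitian) :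
    (trace (A * B)).re = ∑ p : n × n,
      ((A p.1 p.2).re * (B p.1 p.2).re + (A p.1 p.2).im * (B p.1 p.2).im) := by
  rw [Fintype.sum_prod_type]
  simp only [Matrix.trace, Matrix.diag, Matrix.mul_apply, Complex.re_sum, Complex.mul_re]
  refine Finset.sum_congr rfl fun i _ => Finset.sum_congr rfl fun j _ => ?_
  have h : B j i = (starRingEnd ℂ) (B i j) := (hB.apply j i).symm
  rw [h]
  simp only [Complex.conj_re, Complex.conj_im]
  ring

lemma trace_re_eigen (A : Matrix n n ℂ) (hA : A.IsHermitian) :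
    (trace A).re = ∑ i, hA.eigenvalues i := by
  have h : trace A = ∑ i, (hA.eigenvalues i : ℂ) := by
    conv_lhs => rw [hA.spectral_theorem]
    rw [Unitary.conjStarAlgAut_apply, trace_mul_cycle,
      (Matrix.mem_unitaryGroup_iff').mp (hA.eigenvectorUnitary).2, one_mul, trace_diagonal]
    rfl
  rw [h, Complex.re_sum]
  simp

lemma trace_mul_self_re_eigen (A : Matrix n n ℂ) (hA : A.IsHermitian) :
    (trace (A * A)).re = ∑ i, hA.eigenvalues i ^ 2 := by
  have h1 : (star (hA.eigenvectorUnitary : Matrix n n ℂ)) * (hA.eigenvectorUnitary : Matrix n n ℂ) = 1 :=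
    (Matrix.mem_unitaryGroup_iff').mp (hA.eigenvectorUnitary).2
  set U : Matrix n n ℂ := (hA.eigenvectorUnitary : Matrix n n ℂ) with hU
  set D : Matrix n n ℂ := diagonal (RCLike.ofReal ∘ hA.eigenvalues) with hD
  have h2 : A = U * D * star U := hA.spectral_theorem
  have h3 : trace (A * A) = trace (D * D) := by
    rw [h2]
    rw [show U * D * star U * (U * D * star U) = U * (D * D) * star U from by
      simp only [Matrix.mul_assoc]
      rw [← Matrix.mul_assoc (star U) U, h1, one_mul]]
    rw [trace_mul_cycle, ← Matrix.mul_assoc, h1, one_mul]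
  rw [h3, hD, diagonal_mul_diagonal, trace_diagonal, Complex.re_sum]
  simp [sq]

lemma trace_mul_self_re_nonneg (A : Matrix n n ℂ) (hA : A.IsHermitian) :
    0 ≤ (trace (A * A)).re := by
  rw [trace_mul_self_re_eigen A hA]
  positivity

lemma trace_mul_self_re_le_one (A : Matrix n n ℂ) (hA : A.PosSemidef)
    (ht : trace A = 1) : (trace (A * A)).re ≤ 1 := by
  rw [trace_mul_self_re_eigen A hA.1]
  have hs : ∑ i, hA.1.eigenvalues i = 1 := by
    rw [← trace_re_eigen A hA.1, ht]; simp
  calc ∑ i, hA.1.eigenvalues i ^ 2 ≤ (∑ i, hA.1.eigenvalues i) ^ 2 :=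
        Finset.sum_sq_le_sq_sum_of_nonneg fun i _ => hA.eigenvalues_nonneg i
    _ = 1 := by rw [hs]; norm_num

lemma trace_mul_re_le (A B : Matrix n n ℂ) (hA : A.IsHermitian) (hB : B.IsHermitian) :
    (trace (A * B)).re ≤ Real.sqrt ((trace (A * A)).re) * Real.sqrt ((trace (B * B)).re) := by
  set f : (n × n) ⊕ (n × n) → ℝ :=
    Sum.elim (fun p => (A p.1 p.2).re) (fun p => (A p.1 p.2).im) with hf
  set g : (n × n) ⊕ (n × n) → ℝ :=
    Sum.elim (fun p => (B p.1 p.2).re) (fun p => (B p.1 p.2).im) with hg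
  have h1 : (trace (A * B)).re = ∑ x, f x * g x := by
    rw [trace_mul_re_eq_sum A B hB, Fintype.sum_sum_type, ← Finset.sum_add_distrib]
    simp [hf, hg]
  have h2 : (trace (A * A)).re = ∑ x, f x ^ 2 := by
    rw [trace_mul_re_eq_sum A A hA, Fintype.sum_sum_type, ← Finset.sum_add_distrib]
    simp [hf, sq]
  have h3 : (trace (B * B)).re = ∑ x, g x ^ 2 := by
    rw [trace_mul_re_eq_sum B B hB, Fintype.sum_sum_type, ← Finset.sum_add_distrib]
    simp [hg, sq]
  have hcs := Finset.sum_mul_sq_le_sq_mul_sq Finset.univ f g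
  rw [h1, h2, h3, ← Real.sqrt_mul (by positivity)]
  calc ∑ x, f x * g x ≤ |∑ x, f x * g x| := le_abs_self _
    _ = Real.sqrt ((∑ x, f x * g x) ^ 2) := (Real.sqrt_sq_eq_abs _).symm
    _ ≤ Real.sqrt ((∑ x, f x ^ 2) * ∑ x, g x ^ 2) := Real.sqrt_le_sqrt hcs

lemma cauchy3 (x1 x2 x3 y1 y2 y3 : ℝ) :
    (x1 * y1 + x2 * y2 + x3 * y3) ^ 2
      ≤ (x1 ^ 2 + x2 ^ 2 + x3 ^ 2) * (y1 ^ 2 + y2 ^ 2 + y3 ^ 2) := by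
  nlinarith [sq_nonneg (x1 * y2 - x2 * y1), sq_nonneg (x1 * y3 - x3 * y1),
    sq_nonneg (x2 * y3 - x3 * y2)]

lemma real_key (a b t1 t2 t3 t4 : ℝ)
    (h10 : 0 ≤ t1) (h11 : t1 ≤ 1) (h20 : 0 ≤ t2) (h21 : t2 ≤ 1)
    (h30 : 0 ≤ t3) (h31 : t3 ≤ 1) (h40 : 0 ≤ t4) (h41 : t4 ≤ 1)
    (ha : a ≤ Real.sqrt t1 * Real.sqrt t3) (hb : b ≤ Real.sqrt t2 * Real.sqrt t4) :
    (a + Real.sqrt (1 - t1) * Real.sqrt (1 - t3)) *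
        (b + Real.sqrt (1 - t2) * Real.sqrt (1 - t4))
      ≤ a * b + Real.sqrt (1 - t1 * t2) * Real.sqrt (1 - t3 * t4) := by
  set u := Real.sqrt t1 with hu'
  set v := Real.sqrt t3 with hv'
  set w := Real.sqrt t2 with hw'
  set z := Real.sqrt t4 with hz'
  set p := Real.sqrt (1 - t1) with hp'
  set q := Real.sqrt (1 - t3) with hq'
  set r := Real.sqrt (1 - t2) with hr'
  set s := Real.sqrt (1 - t4) with hs'
  have hu : u ^ 2 = t1 := Real.sq_sqrt h10
  have hv : v ^ 2 = t3 := Real.sq_sqrt h30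
  have hw : w ^ 2 = t2 := Real.sq_sqrt h20
  have hz : z ^ 2 = t4 := Real.sq_sqrt h40
  have hp : p ^ 2 = 1 - t1 := Real.sq_sqrt (by linarith)
  have hq : q ^ 2 = 1 - t3 := Real.sq_sqrt (by linarith)
  have hr : r ^ 2 = 1 - t2 := Real.sq_sqrt (by linarith)
  have hs : s ^ 2 = 1 - t4 := Real.sq_sqrt (by linarith)
  have hu0 : 0 ≤ u := Real.sqrt_nonneg _
  have hv0 : 0 ≤ v := Real.sqrt_nonneg _
  have hw0 : 0 ≤ w := Real.sqrt_nonneg _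
  have hz0 : 0 ≤ z := Real.sqrt_nonneg _
  have hp0 : 0 ≤ p := Real.sqrt_nonneg _
  have hq0 : 0 ≤ q := Real.sqrt_nonneg _
  have hr0 : 0 ≤ r := Real.sqrt_nonneg _
  have hs0 : 0 ≤ s := Real.sqrt_nonneg _
  have e1 : (u * r) ^ 2 + (p * w) ^ 2 + (p * r) ^ 2 = 1 - t1 * t2 := by
    calc (u * r) ^ 2 + (p * w) ^ 2 + (p * r) ^ 2
        = u ^ 2 * r ^ 2 + p ^ 2 * w ^ 2 + p ^ 2 * r ^ 2 := by ring
      _ = t1 * (1 - t2) + (1 - t1) * t2 + (1 - t1) * (1 - t2) := by rw [hu, hr, hp, hw]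
      _ = 1 - t1 * t2 := by ring
  have e2 : (v * s) ^ 2 + (q * z) ^ 2 + (q * s) ^ 2 = 1 - t3 * t4 := by
    calc (v * s) ^ 2 + (q * z) ^ 2 + (q * s) ^ 2
        = v ^ 2 * s ^ 2 + q ^ 2 * z ^ 2 + q ^ 2 * s ^ 2 := by ring
      _ = t3 * (1 - t4) + (1 - t3) * t4 + (1 - t3) * (1 - t4) := by rw [hv, hs, hq, hz]
      _ = 1 - t3 * t4 := by ring
  have h12 : 0 ≤ 1 - t1 * t2 := by
    have := mul_le_one₀ h11 h20 h21
    linarith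
  have key : u * v * (r * s) + p * q * (w * z) + p * q * (r * s)
      ≤ Real.sqrt (1 - t1 * t2) * Real.sqrt (1 - t3 * t4) := by
    rw [← Real.sqrt_mul h12]
    have hX : (u * r * (v * s) + p * w * (q * z) + p * r * (q * s)) ^ 2
        ≤ (1 - t1 * t2) * (1 - t3 * t4) := by
      rw [← e1, ← e2]
      exact cauchy3 (u * r) (p * w) (p * r) (v * s) (q * z) (q * s)
    calc u * v * (r * s) + p * q * (w * z) + p * q * (r * s)
        = u * r * (v * s) + p * w * (q * z) + p * r * (q * s) := by ring
      _ ≤ |u * r * (v * s) + p * w * (q * z) + p * r * (q * s)| := le_abs_self _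
      _ = Real.sqrt ((u * r * (v * s) + p * w * (q * z) + p * r * (q * s)) ^ 2) :=
          (Real.sqrt_sq_eq_abs _).symm
      _ ≤ Real.sqrt ((1 - t1 * t2) * (1 - t3 * t4)) := Real.sqrt_le_sqrt hX
  have h5 : a * (r * s) ≤ u * v * (r * s) :=
    mul_le_mul_of_nonneg_right ha (by positivity)
  have h6 : p * q * b ≤ p * q * (w * z) :=
    mul_le_mul_of_nonneg_left hb (by positivity)
  have hexp : (a + p * q) * (b + r * s)
      = a * b + (a * (r * s) + p * q * b + p * q * (r * s)) := by ring
  rw [hexp]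
  linarith [h5, h6, key]

theorem superfidelity_supermultiplicative {N M : ℕ}
    (ρ₁ ρ₃ : Matrix (Fin N) (Fin N) ℂ) (ρ₂ ρ₄ : Matrix (Fin M) (Fin M) ℂ)
    (h₁ : ρ₁.PosSemidef) (h₂ : ρ₂.PosSemidef)
    (h₃ : ρ₃.PosSemidef) (h₄ : ρ₄.PosSemidef)
    (ht₁ : trace ρ₁ = 1) (ht₂ : trace ρ₂ = 1)
    (ht₃ : trace ρ₃ = 1) (ht₄ : trace ρ₄ = 1) :
    sG ρ₁ ρ₃ * sG ρ₂ ρ₄ ≤ sG (ρ₁ ⊗ₖ ρ₂) (ρ₃ ⊗ₖ ρ₄) := by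
  have k1 : trace (ρ₁ ⊗ₖ ρ₂ * ρ₃ ⊗ₖ ρ₄) = trace (ρ₁ * ρ₃) * trace (ρ₂ * ρ₄) := by
    rw [← mul_kronecker_mul, trace_kronecker]
  have k2 : trace (ρ₁ ⊗ₖ ρ₂ * ρ₁ ⊗ₖ ρ₂) = trace (ρ₁ * ρ₁) * trace (ρ₂ * ρ₂) := by
    rw [← mul_kronecker_mul, trace_kronecker]
  have k3 : trace (ρ₃ ⊗ₖ ρ₄ * ρ₃ ⊗ₖ ρ₄) = trace (ρ₃ * ρ₃) * trace (ρ₄ * ρ₄) := by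
    rw [← mul_kronecker_mul, trace_kronecker]
  have i13 : (trace (ρ₁ * ρ₃)).im = 0 := trace_mul_im_zero _ _ h₁.1 h₃.1
  have i24 : (trace (ρ₂ * ρ₄)).im = 0 := trace_mul_im_zero _ _ h₂.1 h₄.1
  have i11 : (trace (ρ₁ * ρ₁)).im = 0 := trace_mul_im_zero _ _ h₁.1 h₁.1
  have i22 : (trace (ρ₂ * ρ₂)).im = 0 := trace_mul_im_zero _ _ h₂.1 h₂.1
  have i33 : (trace (ρ₃ * ρ₃)).im = 0 := trace_mul_im_zero _ _ h₃.1 h₃.1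
  have i44 : (trace (ρ₄ * ρ₄)).im = 0 := trace_mul_im_zero _ _ h₄.1 h₄.1
  unfold sG
  rw [k1, k2, k3, Complex.mul_re, Complex.mul_re, Complex.mul_re,
    i13, i24, i11, i22, i33, i44]
  ring_nf
  have := real_key (trace (ρ₁ * ρ₃)).re (trace (ρ₂ * ρ₄)).re
    (trace (ρ₁ * ρ₁)).re (trace (ρ₂ * ρ₂)).re (trace (ρ₃ * ρ₃)).re (trace (ρ₄ * ρ₄)).re
    (trace_mul_self_re_nonneg _ h₁.1) (trace_mul_self_re_le_one _ h₁ ht₁)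
    (trace_mul_self_re_nonneg _ h₂.1) (trace_mul_self_re_le_one _ h₂ ht₂)
    (trace_mul_self_re_nonneg _ h₃.1) (trace_mul_self_re_le_one _ h₃ ht₃)
    (trace_mul_self_re_nonneg _ h₄.1) (trace_mul_self_re_le_one _ h₄ ht₄)
    (trace_mul_re_le _ _ h₁.1 h₃.1) (trace_mul_re_le _ _ h₂.1 h₄.1)
  linarith [this]
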